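/- If W̃ is a Darboux transformation of W, then the algebra D(W) is commutative if and only if D(W̃) is commutative. -/

import Mathlib

open Polynomial Matrix MeasureTheory
open scoped ComplexOrder

/-- Matrix polynomials: square matrices with polynomial entries. -/
abbrev MatP (n : Type*) := Matrix n n (Polynomial ℂ)

section MatFramework
variable {n : Type*} [Fintype n] [DecidableEq n]

/-- Entrywise `j`-th derivative of a matrix polynomial. -/
noncomputable def derivIter (j : ℕ) (P : MatP n) : MatP n :=
  P.map (fun p => Polynomial.derivative^[j] p)

/-- Right action of the differential operator `∑_j ∂^j F j` on a matrix polynomial: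
`P · D = ∑_j P^{(j)} F_j`. -/
noncomputable def actOp (F : ℕ →₀ MatP n) (P : MatP n) : MatP n :=
  F.sum fun j Fj => derivIter j P * Fj

/-- A map on matrix polynomials is a matrix differential operator with polynomial
coefficients if it is given by some `∑_j ∂^j F_j`. -/
def IsDiffOp (L : MatP n → MatP n) : Prop :=
  ∃ F : ℕ →₀ MatP n, ∀ P, L P = actOp F P

/-- Degree of a matrix polynomial: the sup of the degrees of its entries. -/
noncomputable def matDeg (P : MatP n) : WithBot ℕ :=
  Finset.univ.sup fun ij : n × n => (P ij.1 ij.2).degree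

/-- A differential operator is degree-preserving if `deg (P · V) = deg P` for all `P`. -/
def DegPres (L : MatP n → MatP n) : Prop :=
  IsDiffOp L ∧ ∀ P, matDeg (L P) = matDeg P

/-- Natural-number degree of a matrix polynomial. -/
noncomputable def matNatDeg (P : MatP n) : ℕ :=
  Finset.univ.sup fun ij : n × n => (P ij.1 ij.2).natDegree

/-- Leading coefficient of a matrix polynomial. -/
noncomputable def matLead (P : MatP n) : Matrix n n ℂ :=
  Matrix.of fun i j => (P i j).coeff (matNatDeg P)

/-- Evaluation of a matrix polynomial at a real point. -/
noncomputable def evalMP (P : MatP n) (x : ℝ) : Matrix n n ℂ :=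
  Matrix.of fun i j => (P i j).eval (x : ℂ)

/-- The matrix-valued inner product `⟨P,Q⟩ = ∫_S P(x) W(x) Q(x)^* dx`. -/
noncomputable def wInner (S : Set ℝ) (W : ℝ → Matrix n n ℂ) (P Q : MatP n) :
    Matrix n n ℂ :=
  Matrix.of fun i j => ∫ x in S, (evalMP P x * W x * (evalMP Q x)ᴴ) i j

/-- `W` is a weight matrix supported on `S`: positive definite on `S` with finite moments. -/
def IsWeight (S : Set ℝ) (W : ℝ → Matrix n n ℂ) : Prop :=
  MeasurableSet S ∧ volume S ≠ 0 ∧ (∀ x ∈ S, (W x).PosDef) ∧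
  ∀ (k : ℕ) (i j : n), IntegrableOn (fun x => ‖W x i j‖ * |x| ^ k) S

/-- `P` is the sequence of monic orthogonal matrix polynomials for the weight `W` on `S`. -/
def MonicOPS (S : Set ℝ) (W : ℝ → Matrix n n ℂ) (P : ℕ → MatP n) : Prop :=
  (∀ k, matNatDeg (P k) = k) ∧
  (∀ k, (Matrix.of fun i j => ((P k) i j).coeff k) = (1 : Matrix n n ℂ)) ∧
  (∀ k l, k ≠ l → wInner S W (P k) (P l) = 0)

/-- Membership in the algebra `D(W)`: a differential operator having the (monic orthogonal)
polynomials `P_k` as eigenfunctions with matrix eigenvalues. -/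
def InDW (P : ℕ → MatP n) (L : MatP n → MatP n) : Prop :=
  IsDiffOp L ∧ ∀ k, ∃ Λ : Matrix n n ℂ, L (P k) = Λ.map Polynomial.C * P k

/-- `Pt` (the monic OPS of `W̃`) is obtained from `P` (the monic OPS of `W`) by a Darboux
transformation: some `D = V N ∈ D(W)` with `V, N` degree-preserving and
`P_k · V = A_k P̃_k`, `A_k` nonsingular. -/
def IsDarbouxPair (P Pt : ℕ → MatP n) : Prop :=
  ∃ V Nd : MatP n → MatP n, DegPres V ∧ DegPres Nd ∧
    InDW P (fun Q => Nd (V Q)) ∧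
    ∀ k, ∃ A : Matrix n n ℂ, IsUnit A ∧ V (P k) = A.map Polynomial.C * Pt k

end MatFramework

set_option linter.unusedSectionVars false

section Helpers
variable {n : Type*} [Fintype n] [DecidableEq n]

lemma mapC_mul (X Y : Matrix n n ℂ) :
    (X.map Polynomial.C : MatP n) * Y.map Polynomial.C = (X * Y).map Polynomial.C :=
  (Matrix.map_mul (f := (Polynomial.C : ℂ →+* Polynomial ℂ))).symm

lemma mapC_one : ((1 : Matrix n n ℂ).map Polynomial.C : MatP n) = 1 :=
  Matrix.map_one _ (map_zero _) (map_one _)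

lemma itder_add (j : ℕ) (p q : Polynomial ℂ) :
    Polynomial.derivative^[j] (p + q) =
      Polynomial.derivative^[j] p + Polynomial.derivative^[j] q := by
  induction j generalizing p q with
  | zero => simp
  | succ j ih => simp only [Function.iterate_succ_apply, Polynomial.derivative_add, ih]

lemma itder_sum {ι : Type*} (s : Finset ι) (f : ι → Polynomial ℂ) (j : ℕ) :
    Polynomial.derivative^[j] (∑ x ∈ s, f x) = ∑ x ∈ s, Polynomial.derivative^[j] (f x) := by
  classical
  induction s using Finset.induction with
  | empty => simp [Polynomial.iterate_derivative_zero]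
  | insert _ _ ha ih =>
      rw [Finset.sum_insert ha, Finset.sum_insert ha, itder_add, ih]

lemma derivIter_zero_right (j : ℕ) : derivIter (n := n) j 0 = 0 := by
  refine Matrix.ext fun a b => ?_
  simp [derivIter, Polynomial.iterate_derivative_zero]

lemma derivIter_add (j : ℕ) (A B : MatP n) :
    derivIter j (A + B) = derivIter j A + derivIter j B := by
  refine Matrix.ext fun a b => ?_
  simp [derivIter, itder_add]

lemma derivIter_sum {ι : Type*} (s : Finset ι) (f : ι → MatP n) (j : ℕ) :
    derivIter j (∑ x ∈ s, f x) = ∑ x ∈ s, derivIter j (f x) := by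
  classical
  induction s using Finset.induction with
  | empty => simp [derivIter_zero_right]
  | insert _ _ ha ih =>
      rw [Finset.sum_insert ha, Finset.sum_insert ha, derivIter_add, ih]

lemma derivIter_derivIter (i l : ℕ) (Q : MatP n) :
    derivIter i (derivIter l Q) = derivIter (i + l) Q := by
  refine Matrix.ext fun a b => ?_
  simp only [derivIter, Matrix.map_apply]
  exact (Function.iterate_add_apply _ i l _).symm

lemma derivIter_mul (k : ℕ) (A B : MatP n) :
    derivIter k (A * B) =
      ∑ i ∈ Finset.range (k + 1), k.choose i • (derivIter (k - i) A * derivIter i B) := by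
  refine Matrix.ext fun a b => ?_
  have lhs : derivIter k (A * B) a b = ∑ l, Polynomial.derivative^[k] (A a l * B l b) := by
    simp only [derivIter, Matrix.map_apply, Matrix.mul_apply]
    rw [itder_sum]
  rw [lhs]
  simp_rw [Polynomial.iterate_derivative_mul]
  rw [Finset.sum_comm]
  rw [Matrix.sum_apply]
  refine Finset.sum_congr rfl fun i _ => ?_
  rw [Matrix.smul_apply, Matrix.mul_apply, Finset.smul_sum]
  refine Finset.sum_congr rfl fun l _ => ?_
  simp [derivIter]

lemma derivIter_mapC_mul (j : ℕ) (C : Matrix n n ℂ) (Q : MatP n) :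
    derivIter j (C.map Polynomial.C * Q) = C.map Polynomial.C * derivIter j Q := by
  refine Matrix.ext fun a b => ?_
  simp only [derivIter, Matrix.map_apply, Matrix.mul_apply]
  rw [itder_sum]
  refine Finset.sum_congr rfl fun l _ => ?_
  exact Polynomial.iterate_derivative_C_mul _ _ _

end Helpers

section Helpers2
variable {n : Type*} [Fintype n] [DecidableEq n]

lemma actOp_zero_right (F : ℕ →₀ MatP n) : actOp F (0 : MatP n) = 0 := by
  simp only [actOp, Finsupp.sum]
  exact Finset.sum_eq_zero fun j _ => by rw [derivIter_zero_right, zero_mul]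

lemma actOp_add (F : ℕ →₀ MatP n) (A B : MatP n) :
    actOp F (A + B) = actOp F A + actOp F B := by
  simp only [actOp, Finsupp.sum, derivIter_add, add_mul]
  exact Finset.sum_add_distrib

lemma actOp_sum {ι : Type*} (F : ℕ →₀ MatP n) (s : Finset ι) (f : ι → MatP n) :
    actOp F (∑ i ∈ s, f i) = ∑ i ∈ s, actOp F (f i) := by
  classical
  induction s using Finset.induction with
  | empty => simp [actOp_zero_right]
  | insert _ _ ha ih =>
      rw [Finset.sum_insert ha, Finset.sum_insert ha, actOp_add, ih]

lemma actOp_mapC (F : ℕ →₀ MatP n) (C : Matrix n n ℂ) (Q : MatP n) :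
    actOp F (C.map Polynomial.C * Q) = C.map Polynomial.C * actOp F Q := by
  simp only [actOp, Finsupp.sum, derivIter_mapC_mul, mul_assoc]
  rw [Finset.mul_sum]

lemma actOp_add_left (F G : ℕ →₀ MatP n) (Q : MatP n) :
    actOp (F + G) Q = actOp F Q + actOp G Q :=
  Finsupp.sum_add_index' (fun j => mul_zero _) (fun j b c => mul_add _ _ _)

lemma actOp_single (j : ℕ) (B : MatP n) (Q : MatP n) :
    actOp (Finsupp.single j B) Q = derivIter j Q * B :=
  Finsupp.sum_single_index (mul_zero _)

lemma isDiffOp_congr {L L' : MatP n → MatP n} (h : ∀ Q, L Q = L' Q)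
    (h' : IsDiffOp L') : IsDiffOp L := by
  obtain ⟨F, hF⟩ := h'
  exact ⟨F, fun Q => (h Q).trans (hF Q)⟩

lemma isDiffOp_id : IsDiffOp (fun Q : MatP n => Q) := by
  refine ⟨Finsupp.single 0 1, fun Q => ?_⟩
  rw [actOp_single, mul_one]
  rfl

lemma isDiffOp_zero : IsDiffOp (fun _ : MatP n => (0 : MatP n)) :=
  ⟨0, fun Q => by simp [actOp, Finsupp.sum_zero_index]⟩

lemma isDiffOp_add {L M : MatP n → MatP n} (hL : IsDiffOp L) (hM : IsDiffOp M) :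
    IsDiffOp (fun Q => L Q + M Q) := by
  obtain ⟨F, hF⟩ := hL
  obtain ⟨G, hG⟩ := hM
  exact ⟨F + G, fun Q => by show L Q + M Q = _; rw [hF, hG, actOp_add_left]⟩

lemma isDiffOp_finsetSum {ι : Type*} (s : Finset ι) (L : ι → MatP n → MatP n)
    (h : ∀ i ∈ s, IsDiffOp (L i)) : IsDiffOp (fun Q => ∑ i ∈ s, L i Q) := by
  classical
  induction s using Finset.induction with
  | empty => exact isDiffOp_congr (fun Q => Finset.sum_empty) isDiffOp_zero
  | @insert a s ha ih =>
      refine isDiffOp_congr (fun Q => Finset.sum_insert ha)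
        (isDiffOp_add (h a (Finset.mem_insert_self a s)) (ih fun i hi => h i (Finset.mem_insert_of_mem hi)))

lemma isDiffOp_deriv_comp {L : MatP n → MatP n} (hL : IsDiffOp L) (j : ℕ) (Fj : MatP n) :
    IsDiffOp (fun Q => derivIter j (L Q) * Fj) := by
  obtain ⟨G, hG⟩ := hL
  refine isDiffOp_congr (L' := fun Q => ∑ l ∈ G.support, ∑ i ∈ Finset.range (j + 1),
      derivIter (j - i + l) Q * (j.choose i • (derivIter i (G l) * Fj))) (fun Q => ?_) ?_
  · rw [hG]
    simp only [actOp, Finsupp.sum]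
    rw [derivIter_sum, Finset.sum_mul]
    refine Finset.sum_congr rfl fun l _ => ?_
    rw [derivIter_mul, Finset.sum_mul]
    refine Finset.sum_congr rfl fun i _ => ?_
    rw [smul_mul_assoc, mul_smul_comm, derivIter_derivIter, mul_assoc]
  · refine isDiffOp_finsetSum _ _ fun l _ => isDiffOp_finsetSum _ _ fun i _ => ?_
    exact ⟨Finsupp.single (j - i + l) _, fun Q => (actOp_single _ _ Q).symm⟩

lemma isDiffOp_comp {L M : MatP n → MatP n} (hL : IsDiffOp L) (hM : IsDiffOp M) :
    IsDiffOp (fun Q => M (L Q)) := by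
  obtain ⟨F, hF⟩ := hM
  refine isDiffOp_congr (L' := fun Q => ∑ j ∈ F.support, derivIter j (L Q) * F j)
    (fun Q => by rw [hF]; rfl) ?_
  exact isDiffOp_finsetSum _ _ fun j _ => isDiffOp_deriv_comp hL j (F j)

lemma diffOp_mapC {L : MatP n → MatP n} (hL : IsDiffOp L) (C : Matrix n n ℂ) (Q : MatP n) :
    L (C.map Polynomial.C * Q) = C.map Polynomial.C * L Q := by
  obtain ⟨F, hF⟩ := hL
  rw [hF, hF, actOp_mapC]

lemma diffOp_sum {L : MatP n → MatP n} (hL : IsDiffOp L) {ι : Type*} (s : Finset ι)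
    (f : ι → MatP n) : L (∑ i ∈ s, f i) = ∑ i ∈ s, L (f i) := by
  obtain ⟨F, hF⟩ := hL
  simp only [hF]
  exact actOp_sum F s f

end Helpers2

/-- The algebra `D(W)` (of operators having the monic OPS `P` as eigenfunctions)
is commutative. -/
def DWComm {n : Type*} [Fintype n] [DecidableEq n] (P : ℕ → MatP n) : Prop :=
  ∀ L₁ L₂ : MatP n → MatP n, InDW P L₁ → InDW P L₂ → ∀ Q, L₁ (L₂ Q) = L₂ (L₁ Q)

section Helpers3
variable {n : Type*} [Fintype n] [DecidableEq n]

lemma coeff_mapC_mul (Cm : Matrix n n ℂ) (Pk : MatP n) (r : ℕ) (i j : n) :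
    ((Cm.map Polynomial.C * Pk) i j).coeff r = ∑ l, Cm i l * ((Pk l j).coeff r) := by
  rw [Matrix.mul_apply, Polynomial.finset_sum_coeff]
  refine Finset.sum_congr rfl fun l _ => ?_
  rw [Matrix.map_apply, Polynomial.coeff_C_mul]

lemma mapC_inj {k : ℕ} {Pk : MatP n}
    (hl : (Matrix.of fun i j => (Pk i j).coeff k) = 1)
    {Λ Λ' : Matrix n n ℂ}
    (h : Λ.map Polynomial.C * Pk = Λ'.map Polynomial.C * Pk) : Λ = Λ' := by
  have key : ∀ (X : Matrix n n ℂ) (i j : n),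
      ((X.map Polynomial.C * Pk) i j).coeff k = X i j := by
    intro X i j
    rw [coeff_mapC_mul]
    have h1 : ∀ l, (Pk l j).coeff k = (1 : Matrix n n ℂ) l j := fun l => by rw [← hl]; rfl
    calc ∑ l, X i l * (Pk l j).coeff k = ∑ l, X i l * (1 : Matrix n n ℂ) l j := by
          refine Finset.sum_congr rfl fun l _ => by rw [h1]
      _ = (X * (1 : Matrix n n ℂ)) i j := (Matrix.mul_apply).symm
      _ = X i j := by rw [Matrix.mul_one]
  refine Matrix.ext fun i j => ?_
  rw [← key Λ i j, ← key Λ' i j, h]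

lemma expand_aux (P : ℕ → MatP n)
    (hdeg : ∀ k, matNatDeg (P k) = k)
    (hlead : ∀ k, (Matrix.of fun i j => ((P k) i j).coeff k) = 1) :
    ∀ (m : ℕ) (Q : MatP n), (∀ i j, (Q i j).degree < (m : ℕ)) →
      ∃ C : ℕ → Matrix n n ℂ, Q = ∑ k ∈ Finset.range m, (C k).map Polynomial.C * P k := by
  intro m
  induction m with
  | zero =>
      intro Q hQ
      refine ⟨fun _ => 0, ?_⟩
      rw [Finset.range_zero, Finset.sum_empty]
      refine Matrix.ext fun i j => ?_
      have h0 : (Q i j).degree = ⊥ := by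
        have := hQ i j
        exact Nat.WithBot.lt_zero_iff.mp (by exact_mod_cast this)
      rw [Polynomial.degree_eq_bot] at h0
      simpa using h0
  | succ m ih =>
      intro Q hQ
      set Cm : Matrix n n ℂ := Matrix.of fun i j => (Q i j).coeff m with hCm
      set Q' : MatP n := Q - Cm.map Polynomial.C * P m with hQ'def
      have hPnd : ∀ (l j : n), ((P m) l j).natDegree ≤ m := by
        intro l j
        calc ((P m) l j).natDegree
            ≤ matNatDeg (P m) :=
              Finset.le_sup (f := fun ij : n × n => ((P m) ij.1 ij.2).natDegree)
                (Finset.mem_univ (l, j))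
          _ = m := hdeg m
      have hQ'deg : ∀ i j, (Q' i j).degree < (m : ℕ) := by
        intro i j
        rw [Polynomial.degree_lt_iff_coeff_zero]
        intro r hr
        have hsub : (Q' i j).coeff r
            = (Q i j).coeff r - ((Cm.map Polynomial.C * P m) i j).coeff r := by
          rw [hQ'def, Matrix.sub_apply, Polynomial.coeff_sub]
        rw [hsub, coeff_mapC_mul]
        rcases eq_or_lt_of_le hr with rfl | hr'
        · have hh : ∑ l, Cm i l * ((P m) l j).coeff m
              = (Cm * (Matrix.of fun a b => ((P m) a b).coeff m)) i j := by
            rw [Matrix.mul_apply]; rfl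
          rw [hh, hlead m, Matrix.mul_one]
          rw [hCm]
          simp [sub_eq_zero]
        · have hc1 : (Q i j).coeff r = 0 := by
            apply Polynomial.coeff_eq_zero_of_degree_lt
            exact lt_of_lt_of_le (hQ i j) (by exact_mod_cast hr')
          have hc2 : ∀ l, ((P m) l j).coeff r = 0 := fun l =>
            Polynomial.coeff_eq_zero_of_natDegree_lt (lt_of_le_of_lt (hPnd l j) hr')
          rw [hc1, Finset.sum_eq_zero (fun l _ => by rw [hc2 l, mul_zero]), sub_zero]
      obtain ⟨C, hC⟩ := ih Q' hQ'deg
      refine ⟨Function.update C m Cm, ?_⟩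
      have h1 : ∑ x ∈ Finset.range m, (Function.update C m Cm x).map Polynomial.C * P x
          = ∑ k ∈ Finset.range m, (C k).map Polynomial.C * P k :=
        Finset.sum_congr rfl fun k hk => by
          rw [Function.update_of_ne (Finset.mem_range.mp hk).ne]
      rw [Finset.sum_range_succ, h1, Function.update_self, ← hC, hQ'def]
      abel

lemma expand (P : ℕ → MatP n)
    (hdeg : ∀ k, matNatDeg (P k) = k)
    (hlead : ∀ k, (Matrix.of fun i j => ((P k) i j).coeff k) = 1) (Q : MatP n) :
    ∃ (m : ℕ) (C : ℕ → Matrix n n ℂ),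
      Q = ∑ k ∈ Finset.range m, (C k).map Polynomial.C * P k := by
  refine ⟨matNatDeg Q + 1, ?_⟩
  refine expand_aux P hdeg hlead _ Q fun i j => ?_
  calc (Q i j).degree ≤ ((Q i j).natDegree : WithBot ℕ) := Polynomial.degree_le_natDegree
    _ < ((matNatDeg Q + 1 : ℕ) : WithBot ℕ) := by
        have : (Q i j).natDegree ≤ matNatDeg Q :=
          Finset.le_sup (f := fun ij : n × n => (Q ij.1 ij.2).natDegree)
            (Finset.mem_univ (i, j))
        exact_mod_cast Nat.lt_succ_of_le this

lemma charDW (P : ℕ → MatP n)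
    (hdeg : ∀ k, matNatDeg (P k) = k)
    (hlead : ∀ k, (Matrix.of fun i j => ((P k) i j).coeff k) = 1) :
    DWComm P ↔ ∀ L₁ L₂, InDW P L₁ → InDW P L₂ → ∀ (k : ℕ) (Λ₁ Λ₂ : Matrix n n ℂ),
      L₁ (P k) = Λ₁.map Polynomial.C * P k → L₂ (P k) = Λ₂.map Polynomial.C * P k →
      Λ₁ * Λ₂ = Λ₂ * Λ₁ := by
  constructor
  · intro h L₁ L₂ h₁ h₂ k Λ₁ Λ₂ e₁ e₂
    have hc := h L₁ L₂ h₁ h₂ (P k)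
    rw [e₁, e₂, diffOp_mapC h₁.1, diffOp_mapC h₂.1, e₁, e₂, ← mul_assoc, ← mul_assoc,
      mapC_mul, mapC_mul] at hc
    exact (mapC_inj (hlead k) hc).symm
  · intro hcomm L₁ L₂ h₁ h₂ Q
    choose Λ₁ hΛ₁ using h₁.2
    choose Λ₂ hΛ₂ using h₂.2
    obtain ⟨m, C, hQ⟩ := expand P hdeg hlead Q
    have key : ∀ k, Λ₁ k * Λ₂ k = Λ₂ k * Λ₁ k :=
      fun k => hcomm L₁ L₂ h₁ h₂ k _ _ (hΛ₁ k) (hΛ₂ k)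
    have step : ∀ (L : MatP n → MatP n), IsDiffOp L → ∀ (Λ : ℕ → Matrix n n ℂ),
        (∀ k, L (P k) = (Λ k).map Polynomial.C * P k) → ∀ (D : ℕ → Matrix n n ℂ),
        L (∑ k ∈ Finset.range m, (D k).map Polynomial.C * P k)
          = ∑ k ∈ Finset.range m, (D k * Λ k).map Polynomial.C * P k := by
      intro L hL Λ hΛ D
      rw [diffOp_sum hL]
      refine Finset.sum_congr rfl fun k _ => ?_
      rw [diffOp_mapC hL, hΛ k, ← mul_assoc, mapC_mul]
    rw [hQ, step L₂ h₂.1 Λ₂ hΛ₂ C, step L₁ h₁.1 Λ₁ hΛ₁ _,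
      step L₁ h₁.1 Λ₁ hΛ₁ C, step L₂ h₂.1 Λ₂ hΛ₂ _]
    refine Finset.sum_congr rfl fun k _ => ?_
    rw [mul_assoc, mul_assoc, key k]

lemma mconj_cancel {M : Type*} [Monoid M] {a b : M} (hba : b * a = 1) (x : M) :
    b * (a * x * b) * a = x := by
  rw [← mul_assoc b (a * x) b, mul_assoc (b * (a * x)) b a, hba, mul_one, ← mul_assoc,
    hba, one_mul]

lemma mconj_inj {M : Type*} [Monoid M] {a b : M} (hba : b * a = 1) {x y : M}
    (h : a * x * b = a * y * b) : x = y := by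
  calc x = b * (a * x * b) * a := (mconj_cancel hba x).symm
    _ = b * (a * y * b) * a := by rw [h]
    _ = y := mconj_cancel hba y

lemma mconj_mul {M : Type*} [Monoid M] {a b : M} (hba : b * a = 1) (x y : M) :
    a * x * b * (a * y * b) = a * (x * y) * b := by
  rw [mul_assoc (a * x) b (a * y * b), ← mul_assoc b (a * y) b, ← mul_assoc b a y, hba,
    one_mul, ← mul_assoc (a * x) y b, mul_assoc a x y]

lemma alg1 {M : Type*} [Monoid M] {a b t g₁ g₂ : M} (hab : a * b = 1) (hba : b * a = 1)
    (ht : IsUnit t)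
    (e1 : a * g₁ * b * t * t = t * (a * g₁ * b * t))
    (e2 : a * g₂ * b * t * t = t * (a * g₂ * b * t))
    (e12 : a * g₁ * b * t * (a * g₂ * b * t) = a * g₂ * b * t * (a * g₁ * b * t)) :
    g₁ * g₂ = g₂ * g₁ := by
  have d1 : a * g₁ * b * t = t * (a * g₁ * b) :=
    ht.mul_right_cancel (e1.trans (mul_assoc t _ t).symm)
  have d2 : a * g₂ * b * t = t * (a * g₂ * b) :=
    ht.mul_right_cancel (e2.trans (mul_assoc t _ t).symm)
  have lem : ∀ u v : M, u * t = t * u → v * t = t * v →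
      (u * t) * (v * t) = (u * v) * (t * t) := by
    intro u v hu hv
    rw [mul_assoc u t (v * t), ← mul_assoc t v t, ← hv, mul_assoc v t t,
      ← mul_assoc u v (t * t)]
  have e12' : (a * g₁ * b * (a * g₂ * b)) * (t * t)
      = (a * g₂ * b * (a * g₁ * b)) * (t * t) := by
    rw [← lem _ _ d1 d2, ← lem _ _ d2 d1]
    exact e12
  have h2 : a * g₁ * b * (a * g₂ * b) = a * g₂ * b * (a * g₁ * b) :=
    (ht.mul ht).mul_right_cancel e12'
  rw [mconj_mul hba, mconj_mul hba] at h2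
  exact mconj_inj hba h2

lemma alg2 {M : Type*} [Monoid M] {a b t g₁ g₂ : M} (hab : a * b = 1) (hba : b * a = 1)
    (ht : IsUnit t)
    (e1 : b * t * g₁ * a * (b * t * a) = b * t * a * (b * t * g₁ * a))
    (e2 : b * t * g₂ * a * (b * t * a) = b * t * a * (b * t * g₂ * a))
    (e12 : b * t * g₁ * a * (b * t * g₂ * a) = b * t * g₂ * a * (b * t * g₁ * a)) :
    g₁ * g₂ = g₂ * g₁ := by
  have hb1 : ∀ g : M, b * t * g * a = b * (t * g) * a := fun g => by
    rw [mul_assoc b t g]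
  have key : ∀ g : M, b * t * g * a * (b * t * a) = b * t * a * (b * t * g * a) →
      g * t = t * g := by
    intro g hg
    rw [hb1 g] at hg
    have h1 : b * ((t * g) * t) * a = b * (t * (t * g)) * a := by
      rw [← mconj_mul hab (t * g) t, ← mconj_mul hab t (t * g)]
      exact hg
    have h2 : (t * g) * t = t * (t * g) := mconj_inj hab h1
    have h3 : t * (g * t) = t * (t * g) := by rw [← mul_assoc]; exact h2
    exact ht.mul_left_cancel h3
  have c1 := key g₁ e1
  have c2 := key g₂ e2
  rw [hb1 g₁, hb1 g₂, mconj_mul hab, mconj_mul hab] at e12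
  have h4 : (t * g₁) * (t * g₂) = (t * g₂) * (t * g₁) := mconj_inj hab e12
  have h5 : g₁ * (t * g₂) = g₂ * (t * g₁) := by
    refine ht.mul_left_cancel ?_
    rw [← mul_assoc t g₁ (t * g₂), ← mul_assoc t g₂ (t * g₁)]
    exact h4
  rw [← c2, ← c1] at h5
  have h6 : (g₁ * g₂) * t = (g₂ * g₁) * t := by
    rw [mul_assoc, mul_assoc]
    exact h5
  exact ht.mul_right_cancel h6

end Helpers3

/-- If `W̃` is a Darboux transformation of `W`, then `D(W)` is commutative
if and only if `D(W̃)` is commutative. -/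
theorem stmt9 {n : Type*} [Fintype n] [DecidableEq n]
    (S : Set ℝ) (W Wt : ℝ → Matrix n n ℂ)
    (hW : IsWeight S W) (hWt : IsWeight S Wt)
    (P Pt : ℕ → MatP n) (hP : MonicOPS S W P) (hPt : MonicOPS S Wt Pt)
    (hDar : IsDarbouxPair P Pt) :
    DWComm P ↔ DWComm Pt := by
  obtain ⟨V, Nd, hV, hNd, hDin, hA⟩ := hDar
  choose A hAu hAV using hA
  choose Θ hΘ0 using hDin.2
  have hΘ' : ∀ k, Nd (V (P k)) = (Θ k).map Polynomial.C * P k := hΘ0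
  have hinv : ∀ k, ∃ B : Matrix n n ℂ, A k * B = 1 ∧ B * A k = 1 := fun k =>
    ⟨↑(hAu k).unit⁻¹, by simpa [(hAu k).unit_spec] using (hAu k).unit.mul_inv,
      by simpa [(hAu k).unit_spec] using (hAu k).unit.inv_mul⟩
  choose A' hAA' hA'A using hinv
  have hPtk : ∀ k, Pt k = (A' k).map Polynomial.C * V (P k) := by
    intro k
    rw [hAV k, ← mul_assoc, mapC_mul, hA'A k, mapC_one, one_mul]
  have hinj : ∀ Q : MatP n, Nd (V Q) = 0 → Q = 0 := by
    intro Q h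
    have hd : matDeg Q = ⊥ := by
      rw [← hV.2 Q, ← hNd.2 (V Q), h, matDeg]
      refine (Finset.sup_eq_bot_iff _ _).mpr fun ij _ => ?_
      simp
    refine Matrix.ext fun i j => ?_
    have hb := (Finset.sup_eq_bot_iff _ _).mp hd (i, j) (Finset.mem_univ _)
    rw [Polynomial.degree_eq_bot] at hb
    simpa using hb
  have hΘu : ∀ k, IsUnit (Θ k) := by
    intro k
    rw [Matrix.isUnit_iff_isUnit_det, isUnit_iff_ne_zero]
    intro hdet
    obtain ⟨v, hv, hv0⟩ := Matrix.exists_vecMul_eq_zero_iff.mpr hdet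
    set Cm : Matrix n n ℂ := Matrix.of fun _ j => v j with hCmdef
    have hCmΘ : Cm * Θ k = 0 := by
      refine Matrix.ext fun i j => ?_
      have h2 := congrFun hv0 j
      simpa [Matrix.mul_apply, Matrix.vecMul, dotProduct, hCmdef] using h2
    have h0 : Nd (V (Cm.map Polynomial.C * P k)) = 0 := by
      rw [diffOp_mapC hV.1, diffOp_mapC hNd.1, hΘ' k, ← mul_assoc, mapC_mul, hCmΘ,
        Matrix.map_zero _ (map_zero _), zero_mul]
    have hCm0 : Cm.map Polynomial.C * P k = 0 := hinj _ h0
    have hCmeq : Cm = 0 := by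
      refine mapC_inj (hP.2.1 k) (Λ' := 0) ?_
      rw [Matrix.map_zero _ (map_zero _), zero_mul, hCm0]
    obtain ⟨j₀, hj₀⟩ := Function.ne_iff.mp hv
    apply hj₀
    have := congrFun (congrFun hCmeq j₀) j₀
    simpa [hCmdef] using this
  have comp1 : ∀ (L : MatP n → MatP n), IsDiffOp L → ∀ (k : ℕ) (Γ : Matrix n n ℂ),
      L (Pt k) = Γ.map Polynomial.C * Pt k →
      Nd (L (V (P k))) = (A k * Γ * A' k * Θ k).map Polynomial.C * P k := by
    intro L hdiff k Γ hΓ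
    conv_lhs => rw [hAV k, diffOp_mapC hdiff, hΓ, ← mul_assoc, mapC_mul, hPtk k,
      ← mul_assoc, mapC_mul, diffOp_mapC hNd.1, hΘ' k, ← mul_assoc, mapC_mul]
  have comp2 : ∀ (L : MatP n → MatP n), IsDiffOp L → ∀ (k : ℕ) (Λ : Matrix n n ℂ),
      L (P k) = Λ.map Polynomial.C * P k →
      V (L (Nd (Pt k))) = (A' k * Θ k * Λ * A k).map Polynomial.C * Pt k := by
    intro L hdiff k Λ hΛ
    conv_lhs => rw [hPtk k, diffOp_mapC hNd.1, hΘ' k, ← mul_assoc, mapC_mul,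
      diffOp_mapC hdiff, hΛ, ← mul_assoc, mapC_mul, diffOp_mapC hV.1, hAV k,
      ← mul_assoc, mapC_mul]
  have mk1 : ∀ L, InDW Pt L → InDW P (fun Q => Nd (L (V Q))) := by
    intro L hL
    refine ⟨isDiffOp_comp (isDiffOp_comp hV.1 hL.1) hNd.1, fun k => ?_⟩
    obtain ⟨Γ, hΓ⟩ := hL.2 k
    exact ⟨A k * Γ * A' k * Θ k, comp1 L hL.1 k Γ hΓ⟩
  have mk2 : ∀ L, InDW P L → InDW Pt (fun Q => V (L (Nd Q))) := by
    intro L hL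
    refine ⟨isDiffOp_comp (isDiffOp_comp hNd.1 hL.1) hV.1, fun k => ?_⟩
    obtain ⟨Λ, hΛ⟩ := hL.2 k
    exact ⟨A' k * Θ k * Λ * A k, comp2 L hL.1 k Λ hΛ⟩
  constructor
  · intro h
    rw [charDW Pt hPt.1 hPt.2.1]
    intro L₁ L₂ h₁ h₂ k Γ₁ Γ₂ e₁ e₂
    have hch := (charDW P hP.1 hP.2.1).mp h
    have E1 := comp1 L₁ h₁.1 k Γ₁ e₁
    have E2 := comp1 L₂ h₂.1 k Γ₂ e₂
    have e12 := hch _ _ (mk1 L₁ h₁) (mk1 L₂ h₂) k _ _ E1 E2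
    have f1 := hch _ _ (mk1 L₁ h₁) hDin k _ _ E1 (hΘ' k)
    have f2 := hch _ _ (mk1 L₂ h₂) hDin k _ _ E2 (hΘ' k)
    exact alg1 (hAA' k) (hA'A k) (hΘu k) f1 f2 e12
  · intro h
    rw [charDW P hP.1 hP.2.1]
    intro L₁ L₂ h₁ h₂ k Λ₁ Λ₂ e₁ e₂
    have hch := (charDW Pt hPt.1 hPt.2.1).mp h
    have E1 := comp2 L₁ h₁.1 k Λ₁ e₁
    have E2 := comp2 L₂ h₂.1 k Λ₂ e₂
    have hid : InDW P (fun Q : MatP n => Q) :=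
      ⟨isDiffOp_id, fun k => ⟨1, by rw [mapC_one, one_mul]⟩⟩
    have hDt : InDW Pt (fun Q => V (Nd Q)) := mk2 _ hid
    have ED : V (Nd (Pt k)) = (A' k * Θ k * A k).map Polynomial.C * Pt k := by
      have hEd := comp2 _ isDiffOp_id k 1 (by rw [mapC_one, one_mul])
      rwa [mul_one] at hEd
    have e12 := hch _ _ (mk2 L₁ h₁) (mk2 L₂ h₂) k _ _ E1 E2
    have f1 := hch _ _ (mk2 L₁ h₁) hDt k _ _ E1 ED
    have f2 := hch _ _ (mk2 L₂ h₂) hDt k _ _ E2 ED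
    exact alg2 (hAA' k) (hA'A k) (hΘu k) f1 f2 e12
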